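/- Let Σ be an alphabet, let $ be a letter not in Σ, let T_1, …, T_r (r ≥ 1) be nonempty strings over Σ, let d ∈ ℕ, and let P = $^{d+1} (d+1 consecutive copies of $). The single string equation P T_1 P T_2 ⋯ P T_r ≡ X X ⋯ X (the single block X repeated r times) admits a solution with at most d deletions if and only if there exists a (possibly empty) string s over Σ that is a subsequence of every T_i and satisfies Σ_{i=1}^r |T_i| − r·|s| ≤ d. (Correctness of the single-equation reduction from Longest Common Subsequence in Theorem 3.3, taking the paper's 'sufficiently long' $-prefix to have length d+1.) -/

import Mathlib

namespace Stmt2Aux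

open List

variable {α : Type*} [DecidableEq α]

/-- number of positions where a non-dollar letter is immediately followed by a dollar,
with `prev` the letter preceding the list. -/
def gcnt (dol : α) : α → List α → ℕ
  | _, [] => 0
  | prev, b :: l => (if prev ≠ dol ∧ b = dol then 1 else 0) + gcnt dol b l

lemma gcnt_nil (dol prev : α) : gcnt dol prev [] = 0 := rfl

lemma gcnt_cons (dol prev b : α) (l : List α) :
    gcnt dol prev (b :: l) = (if prev ≠ dol ∧ b = dol then 1 else 0) + gcnt dol b l := rfl

lemma gcnt_aux (dol prev b : α) (l : List α) :
    gcnt dol prev l ≤ (if prev ≠ dol ∧ b = dol then 1 else 0) + gcnt dol b l := by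
  cases l with
  | nil => simp [gcnt_nil]
  | cons c t =>
    rw [gcnt_cons, gcnt_cons]
    split_ifs <;> simp_all <;> omega

lemma gcnt_mono {dol : α} {l₁ l₂ : List α} (h : l₁.Sublist l₂) :
    ∀ prev, gcnt dol prev l₁ ≤ gcnt dol prev l₂ := by
  induction h with
  | slnil => intro prev; simp [gcnt_nil]
  | cons b h ih =>
    intro prev
    calc gcnt dol prev _ ≤ gcnt dol prev _ := ih prev
    _ ≤ _ := by rw [gcnt_cons]; exact gcnt_aux dol prev b _
  | cons_cons b h ih =>
    intro prev
    rw [gcnt_cons, gcnt_cons]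
    exact Nat.add_le_add_left (ih b) _

lemma gcnt_replicate_append (dol : α) (k : ℕ) (l : List α) :
    gcnt dol dol (List.replicate k dol ++ l) = gcnt dol dol l := by
  induction k with
  | zero => simp
  | succ k ih =>
    rw [List.replicate_succ, List.cons_append, gcnt_cons]
    simp [ih]

lemma gcnt_prev_irrel {dol prev x : α} (hp : prev ≠ dol) (hx : x ≠ dol) (l : List α) :
    gcnt dol prev l = gcnt dol x l := by
  cases l with
  | nil => rfl
  | cons b t => rw [gcnt_cons, gcnt_cons]; simp [hp, hx]

lemma gcnt_append_of_ne_aux {dol : α} {w : List α} (hwd : ∀ a ∈ w, a ≠ dol) :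
    ∀ (prev x : α), prev ≠ dol → x ≠ dol → ∀ l, gcnt dol prev (w ++ l) = gcnt dol x l := by
  induction w with
  | nil => intro prev x hp hx l; simpa using gcnt_prev_irrel hp hx l
  | cons a w ih =>
    intro prev x hp hx l
    have ha : a ≠ dol := hwd a (by simp)
    rw [List.cons_append, gcnt_cons]
    simp only [ha, and_false, if_neg (by simp [ha] : ¬(prev ≠ dol ∧ a = dol))]
    simpa using ih (fun b hb => hwd b (by simp [hb])) a x ha hx l

lemma gcnt_append_of_ne {dol : α} {w : List α} (hwd : ∀ a ∈ w, a ≠ dol) (hwne : w ≠ [])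
    {x : α} (hx : x ≠ dol) (prev : α) (l : List α) :
    gcnt dol prev (w ++ l) = gcnt dol x l := by
  cases w with
  | nil => exact absurd rfl hwne
  | cons a w =>
    have ha : a ≠ dol := hwd a (by simp)
    rw [List.cons_append, gcnt_cons]
    simp only [ha, and_false, if_neg (by simp [ha] : ¬(prev ≠ dol ∧ a = dol))]
    simpa using gcnt_append_of_ne_aux (fun b hb => hwd b (by simp [hb])) a x ha hx l

lemma gcnt_L {dol : α} {k : ℕ} {w : List α} (hk : k ≠ 0)
    (hwd : ∀ a ∈ w, a ≠ dol) (hwne : w ≠ []) :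
    ∀ m : ℕ,
      gcnt dol dol ((List.replicate m (List.replicate k dol ++ w)).flatten) = m - 1 ∧
      ∀ x, x ≠ dol →
        gcnt dol x ((List.replicate m (List.replicate k dol ++ w)).flatten) = m := by
  intro m
  induction m with
  | zero => simp [gcnt_nil]
  | succ m ih =>
    obtain ⟨wh, wt, rfl⟩ : ∃ wh wt, w = wh :: wt := by
      cases w with
      | nil => exact absurd rfl hwne
      | cons a t => exact ⟨a, t, rfl⟩
    have hwh : wh ≠ dol := hwd wh (by simp)
    obtain ⟨k', rfl⟩ : ∃ k', k = k' + 1 := by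
      cases k with
      | zero => exact absurd rfl hk
      | succ k' => exact ⟨k', rfl⟩
    have hmain : gcnt dol dol ((List.replicate (m+1) (List.replicate (k'+1) dol ++ (wh :: wt))).flatten) = m := by
      rw [List.replicate_succ, List.flatten_cons, List.append_assoc,
        gcnt_replicate_append]
      rw [gcnt_append_of_ne hwd (by simp) hwh dol _]
      exact ih.2 wh hwh
    refine ⟨by simpa using hmain, ?_⟩
    intro x hx
    have hcons : (List.replicate (m+1) (List.replicate (k'+1) dol ++ (wh :: wt))).flatten
        = dol :: (List.replicate k' dol ++ ((wh :: wt) ++ (List.replicate m (List.replicate (k'+1) dol ++ (wh :: wt))).flatten)) := by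
      conv_lhs => rw [List.replicate_succ, List.flatten_cons]
      rw [List.replicate_succ]
      simp [List.append_assoc]
    have hrest : gcnt dol dol (List.replicate k' dol ++ ((wh :: wt) ++ (List.replicate m (List.replicate (k'+1) dol ++ (wh :: wt))).flatten)) = m := by
      have h2 := hmain
      rw [hcons, gcnt_cons] at h2
      simpa using h2
    rw [hcons, gcnt_cons, hrest, if_pos ⟨hx, rfl⟩]
    omega

lemma gcnt_FW {dol : α} {n : ℕ} :
    ∀ Ts : List (List α), (∀ T ∈ Ts, ∀ a ∈ T, a ≠ dol) →
      gcnt dol dol ((Ts.map fun T => List.replicate n dol ++ T).flatten) ≤ Ts.length - 1 := by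
  intro Ts
  induction Ts with
  | nil => simp [gcnt_nil]
  | cons T₀ tail ih =>
    intro hTs
    have hT₀ : ∀ a ∈ T₀, a ≠ dol := hTs T₀ (by simp)
    have htail : ∀ T ∈ tail, ∀ a ∈ T, a ≠ dol := fun T hT => hTs T (by simp [hT])
    rw [List.map_cons, List.flatten_cons, List.append_assoc, gcnt_replicate_append]
    cases T₀ with
    | nil =>
      simp only [List.nil_append]
      calc gcnt dol dol _ ≤ tail.length - 1 := ih htail
      _ ≤ _ := by simp only [List.length_cons]; omega
    | cons a t =>
      have ha : a ≠ dol := hT₀ a (by simp)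
      rw [gcnt_append_of_ne hT₀ (by simp) ha dol _]
      cases tail with
      | nil => simp [gcnt_nil]
      | cons T₁ tl =>
        have h1 : gcnt dol a ((List.map (fun T => List.replicate n dol ++ T) (T₁ :: tl)).flatten)
            ≤ (if a ≠ dol ∧ dol = dol then 1 else 0) + gcnt dol dol ((List.map (fun T => List.replicate n dol ++ T) (T₁ :: tl)).flatten) :=
          gcnt_aux dol a dol _
        have h2 := ih htail
        rw [if_pos ⟨ha, rfl⟩] at h1
        simp only [List.length_cons] at h2 ⊢
        omega

lemma gcnt_xds {dol x : α} (hx : x ≠ dol) :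
    ∀ m prev, gcnt dol prev ((List.replicate m [x, dol]).flatten) = m := by
  intro m
  induction m with
  | zero => intro prev; simp [gcnt_nil]
  | succ m ih =>
    intro prev
    rw [List.replicate_succ, List.flatten_cons]
    show gcnt dol prev (x :: dol :: _) = m + 1
    rw [gcnt_cons, gcnt_cons]
    simp [hx, ih dol]
    omega

lemma shape (dol : α) (u : List α) :
    (∃ k w, u = List.replicate k dol ++ w ∧ ∀ a ∈ w, a ≠ dol) ∨
    (∃ x, x ≠ dol ∧ [x, dol].Sublist u) := by
  induction u with
  | nil => exact Or.inl ⟨0, [], by simp⟩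
  | cons a t ih =>
    rcases ih with ⟨k, w, ht, hw⟩ | ⟨x, hx, hxs⟩
    · by_cases ha : a = dol
      · subst ha
        exact Or.inl ⟨k + 1, w, by rw [List.replicate_succ, List.cons_append, ht], hw⟩
      · by_cases hd : dol ∈ t
        · exact Or.inr ⟨a, ha, List.cons_sublist_cons.mpr (List.singleton_sublist.mpr hd)⟩
        · refine Or.inl ⟨0, a :: t, by simp, ?_⟩
          intro b hb
          rcases List.mem_cons.mp hb with rfl | hb
          · exact ha
          · exact fun h => hd (h ▸ hb)
    · exact Or.inr ⟨x, hx, hxs.trans (List.sublist_cons_self a t)⟩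

lemma flatten_replicate_sublist {u₁ u₂ : List α} (h : u₁.Sublist u₂) :
    ∀ m, (List.replicate m u₁).flatten.Sublist (List.replicate m u₂).flatten := by
  intro m
  induction m with
  | zero => simp
  | succ m ih =>
    rw [List.replicate_succ, List.flatten_cons, List.replicate_succ, List.flatten_cons]
    exact h.append ih

/-- count of dollars -/
def dct (dol : α) : List α → ℕ
  | [] => 0
  | a :: t => (if a = dol then 1 else 0) + dct dol t

/-- count of non-dollars -/
def nct (dol : α) : List α → ℕ
  | [] => 0
  | a :: t => (if a = dol then 0 else 1) + nct dol t

lemma dct_append (dol : α) : ∀ l₁ l₂ : List α, dct dol (l₁ ++ l₂) = dct dol l₁ + dct dol l₂ := by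
  intro l₁ l₂
  induction l₁ with
  | nil => simp [dct]
  | cons a t ih => simp [dct, ih]; omega

lemma nct_append (dol : α) : ∀ l₁ l₂ : List α, nct dol (l₁ ++ l₂) = nct dol l₁ + nct dol l₂ := by
  intro l₁ l₂
  induction l₁ with
  | nil => simp [nct]
  | cons a t ih => simp [nct, ih]; omega

lemma dct_add_nct (dol : α) : ∀ l : List α, dct dol l + nct dol l = l.length := by
  intro l
  induction l with
  | nil => simp [dct, nct]
  | cons a t ih => simp [dct, nct]; split_ifs <;> omega

lemma dct_sublist {dol : α} {l₁ l₂ : List α} (h : l₁.Sublist l₂) : dct dol l₁ ≤ dct dol l₂ := by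
  induction h with
  | slnil => simp
  | cons b h ih => simp [dct]; omega
  | cons_cons b h ih => simp [dct]; omega

lemma nct_sublist {dol : α} {l₁ l₂ : List α} (h : l₁.Sublist l₂) : nct dol l₁ ≤ nct dol l₂ := by
  induction h with
  | slnil => simp
  | cons b h ih => simp [nct]; omega
  | cons_cons b h ih => simp [nct]; omega

lemma dct_replicate (dol : α) (n : ℕ) : dct dol (List.replicate n dol) = n := by
  induction n with
  | zero => simp [dct]
  | succ n ih => rw [List.replicate_succ]; simp [dct, ih]; omega

lemma nct_replicate (dol : α) (n : ℕ) : nct dol (List.replicate n dol) = 0 := by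
  induction n with
  | zero => simp [nct]
  | succ n ih => rw [List.replicate_succ]; simp [nct, ih]

lemma dct_of_ne {dol : α} {l : List α} (h : ∀ a ∈ l, a ≠ dol) : dct dol l = 0 := by
  induction l with
  | nil => simp [dct]
  | cons a t ih =>
    simp [dct, h a (by simp), ih (fun b hb => h b (by simp [hb]))]

lemma nct_of_ne {dol : α} {l : List α} (h : ∀ a ∈ l, a ≠ dol) : nct dol l = l.length := by
  induction l with
  | nil => simp [nct]
  | cons a t ih =>
    simp [nct, h a (by simp), ih (fun b hb => h b (by simp [hb]))]
    omega

lemma dct_flatten_replicate (dol : α) (u : List α) :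
    ∀ m, dct dol ((List.replicate m u).flatten) = m * dct dol u := by
  intro m
  induction m with
  | zero => simp [dct]
  | succ m ih =>
    rw [List.replicate_succ, List.flatten_cons, dct_append, ih]
    ring

lemma nct_flatten_replicate (dol : α) (u : List α) :
    ∀ m, nct dol ((List.replicate m u).flatten) = m * nct dol u := by
  intro m
  induction m with
  | zero => simp [nct]
  | succ m ih =>
    rw [List.replicate_succ, List.flatten_cons, nct_append, ih]
    ring

lemma dct_FW (dol : α) (n : ℕ) :
    ∀ Ts : List (List α), (∀ T ∈ Ts, ∀ a ∈ T, a ≠ dol) →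
      dct dol ((Ts.map fun T => List.replicate n dol ++ T).flatten) = Ts.length * n := by
  intro Ts
  induction Ts with
  | nil => simp [dct]
  | cons T₀ tail ih =>
    intro hTs
    rw [List.map_cons, List.flatten_cons, dct_append, dct_append, dct_replicate,
      dct_of_ne (hTs T₀ (by simp)), ih (fun T hT => hTs T (by simp [hT]))]
    simp only [List.length_cons]
    ring

lemma nct_FW (dol : α) (n : ℕ) :
    ∀ Ts : List (List α), (∀ T ∈ Ts, ∀ a ∈ T, a ≠ dol) →
      nct dol ((Ts.map fun T => List.replicate n dol ++ T).flatten) = (Ts.map List.length).sum := by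
  intro Ts
  induction Ts with
  | nil => simp [nct]
  | cons T₀ tail ih =>
    intro hTs
    rw [List.map_cons, List.flatten_cons, nct_append, nct_append, nct_replicate,
      nct_of_ne (hTs T₀ (by simp)), ih (fun T hT => hTs T (by simp [hT]))]
    simp

lemma repl_eq {x wh : α} (hwh : wh ≠ x) :
    ∀ {k j : ℕ} {b rest : List α},
      List.replicate k x ++ (wh :: rest) = List.replicate j x ++ b →
      j ≤ k ∧ b = List.replicate (k - j) x ++ (wh :: rest) := by
  intro k
  induction k with
  | zero =>
    intro j b rest h
    cases j with
    | zero => exact ⟨le_refl 0, by simpa using h.symm⟩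
    | succ j =>
      rw [List.replicate_succ] at h
      simp only [List.replicate_zero, List.nil_append, List.cons_append, List.cons.injEq] at h
      exact absurd h.1 hwh
  | succ k ih =>
    intro j b rest h
    cases j with
    | zero =>
      simp only [List.replicate, List.nil_append] at h
      refine ⟨Nat.zero_le _, ?_⟩
      rw [← h, Nat.sub_zero, List.replicate_succ, List.cons_append]
    | succ j =>
      rw [List.replicate_succ, List.replicate_succ] at h
      simp only [List.cons_append, List.cons.injEq, true_and] at h
      obtain ⟨hle, hb⟩ := ih h
      exact ⟨Nat.succ_le_succ hle, by rwa [Nat.succ_sub_succ]⟩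

lemma headskip {x : α} {t A B : List α} (h : (x :: t).Sublist (A ++ B)) (hx : x ∉ A) :
    (x :: t).Sublist B := by
  induction A with
  | nil => simpa using h
  | cons a A' ih =>
    rw [List.cons_append] at h
    rcases List.sublist_cons_iff.mp h with h' | ⟨rr, heq, hrr⟩
    · exact ih h' (fun hm => hx (by simp [hm]))
    · have hxa : x = a := by
        have := heq
        simp only [List.cons.injEq] at this
        exact this.1
      exact absurd hxa (fun he => hx (by simp [he]))

lemma align {dol : α} {k n : ℕ} {w : List α} (hk : k ≠ 0) (hn : n ≠ 0)
    (hwne : w ≠ []) (hwd : ∀ a ∈ w, a ≠ dol) :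
    ∀ Ts : List (List α), (∀ T ∈ Ts, ∀ a ∈ T, a ≠ dol) →
      ((List.replicate Ts.length (List.replicate k dol ++ w)).flatten).Sublist
        ((Ts.map fun T => List.replicate n dol ++ T).flatten) →
      ∀ T ∈ Ts, w.Sublist T := by
  obtain ⟨wh, wt, rfl⟩ : ∃ wh wt, w = wh :: wt := by
    cases w with
    | nil => exact absurd rfl hwne
    | cons a t => exact ⟨a, t, rfl⟩
  have hwh : wh ≠ dol := hwd wh (by simp)
  intro Ts
  induction Ts with
  | nil => simp
  | cons T₀ tail ih =>
    intro hTs hsub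
    have hT₀d : ∀ a ∈ T₀, a ≠ dol := hTs T₀ (by simp)
    have htaild : ∀ T ∈ tail, ∀ a ∈ T, a ≠ dol := fun T hT => hTs T (by simp [hT])
    have hdolT₀ : dol ∉ T₀ := fun hm => hT₀d dol hm rfl
    -- normalize the sublist hypothesis
    have hsub' : (List.replicate k dol ++ ((wh :: wt) ++
          (List.replicate tail.length (List.replicate k dol ++ (wh :: wt))).flatten)).Sublist
        (List.replicate n dol ++ (T₀ ++
          ((tail.map fun T => List.replicate n dol ++ T)).flatten)) := by
      have h1 := hsub
      rw [List.length_cons, List.replicate_succ, List.flatten_cons, List.map_cons,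
        List.flatten_cons] at h1
      simpa [List.append_assoc] using h1
    -- the key fact: w <+ T₀ and the remaining pattern embeds in the tail
    have hkey : (wh :: wt).Sublist T₀ ∧
        ((List.replicate tail.length (List.replicate k dol ++ (wh :: wt))).flatten).Sublist
          ((tail.map fun T => List.replicate n dol ++ T)).flatten := by
      obtain ⟨a, b, heq, ha, hb⟩ := List.sublist_append_iff.mp hsub'
      obtain ⟨j, hjn, rfl⟩ := List.sublist_replicate_iff.mp ha
      rw [List.cons_append] at heq
      obtain ⟨hjk, hbeq⟩ := repl_eq hwh heq
      rw [← List.cons_append] at hbeq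
      subst hbeq
      -- case j < k : leftover dollars at the head of b
      rcases Nat.lt_or_ge j k with hjlt | hjge
      · exfalso
        obtain ⟨t', ht'⟩ : ∃ t', k - j = t' + 1 := ⟨k - j - 1, by omega⟩
        have hbhead : List.replicate (k - j) dol ++ ((wh :: wt) ++
              (List.replicate tail.length (List.replicate k dol ++ (wh :: wt))).flatten)
            = dol :: (List.replicate t' dol ++ ((wh :: wt) ++
              (List.replicate tail.length (List.replicate k dol ++ (wh :: wt))).flatten)) := by
          rw [ht', List.replicate_succ, List.cons_append]
        rw [hbhead] at hb
        have hb' := headskip hb hdolT₀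
        -- now the whole remaining pattern is inside the tail blocks
        cases htail : tail with
        | nil =>
          rw [htail] at hb'
          simp at hb'
        | cons T₁ tl =>
          have hm1 : tail.length ≠ 0 := by rw [htail]; simp
          have hg : gcnt dol dol (dol :: (List.replicate t' dol ++ ((wh :: wt) ++
                (List.replicate tail.length (List.replicate k dol ++ (wh :: wt))).flatten)))
              = tail.length := by
            rw [gcnt_cons]
            have h0 : gcnt dol dol (List.replicate t' dol ++ ((wh :: wt) ++
                  (List.replicate tail.length (List.replicate k dol ++ (wh :: wt))).flatten))
                = tail.length := by
              rw [gcnt_replicate_append,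
                gcnt_append_of_ne hwd (by simp) hwh dol _]
              exact (gcnt_L hk hwd (by simp) tail.length).2 wh hwh
            rw [h0]
            simp
          have hmono := gcnt_mono (dol := dol) hb' dol
          rw [hg] at hmono
          have hup := gcnt_FW (dol := dol) (n := n) tail htaild
          omega
      · -- j = k
        have hjk' : k - j = 0 := by omega
        rw [hjk', List.replicate_zero, List.nil_append] at hb
        obtain ⟨c, e, heq2, hc, he⟩ := List.sublist_append_iff.mp hb
        rcases List.append_eq_append_iff.mp heq2 with ⟨a', hc', hLm⟩ | ⟨c', hw', he'⟩
        · -- c = w ++ a'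
          cases ha' : a' with
          | nil =>
            subst ha'
            rw [List.append_nil] at hc'
            rw [hc'] at hc
            rw [List.nil_append] at hLm
            exact ⟨hc, hLm ▸ he⟩
          | cons y ys =>
            exfalso
            subst ha'
            -- Lm starts with dol, so y = dol, so dol ∈ c <+ T₀
            cases htail : tail with
            | nil =>
              rw [htail] at hLm
              simp at hLm
            | cons T₁ tl =>
              have : (List.replicate tail.length (List.replicate k dol ++ (wh :: wt))).flatten
                  = dol :: (List.replicate (k-1) dol ++ ((wh :: wt) ++
                    (List.replicate (tail.length - 1) (List.replicate k dol ++ (wh :: wt))).flatten)) := by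
                rw [htail]
                simp only [List.length_cons]
                rw [List.replicate_succ, List.flatten_cons]
                obtain ⟨k', rfl⟩ : ∃ k', k = k' + 1 := ⟨k - 1, by omega⟩
                rw [List.replicate_succ, List.cons_append, List.cons_append]
                simp [List.append_assoc]
              rw [this] at hLm
              have hy : y = dol := by
                have := hLm
                simp only [List.cons_append, List.cons.injEq] at this
                exact this.1.symm
              have hdolc : dol ∈ c := by
                rw [hc', ← hy]
                simp
              exact hdolT₀ (hc.subset hdolc)
        · -- w = c ++ c', e = c' ++ Lm
          cases hc'' : c' with
          | nil =>
            subst hc''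
            rw [List.append_nil] at hw'
            rw [← hw'] at hc
            rw [List.nil_append] at he'
            rw [← he']
            exact ⟨hc, he⟩
          | cons z zs =>
            exfalso
            subst hc''
            have hzd : ∀ a ∈ (z :: zs), a ≠ dol := by
              intro a hazs
              exact hwd a (by rw [hw']; exact List.mem_append_right c hazs)
            have hz : z ≠ dol := hzd z (by simp)
            rw [he'] at he
            cases htail : tail with
            | nil =>
              rw [htail] at he
              simp at he
            | cons T₁ tl =>
              have hm1 : tail.length ≠ 0 := by rw [htail]; simp
              have hg : gcnt dol dol ((z :: zs) ++
                    (List.replicate tail.length (List.replicate k dol ++ (wh :: wt))).flatten)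
                  = tail.length := by
                rw [gcnt_append_of_ne hzd (by simp) hz dol _]
                exact (gcnt_L hk hwd (by simp) tail.length).2 z hz
              have hmono := gcnt_mono (dol := dol) he dol
              rw [hg] at hmono
              have hup := gcnt_FW (dol := dol) (n := n) tail htaild
              omega
    intro T hT
    rcases List.mem_cons.mp hT with rfl | hT'
    · exact hkey.1
    · exact ih htaild hkey.2 T hT'

lemma bwd {dol : α} (n : ℕ) (s : List α) :
    ∀ Ts : List (List α), (∀ T ∈ Ts, s.Sublist T) →
      ((List.replicate Ts.length (List.replicate n dol ++ s)).flatten).Sublist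
        ((Ts.map fun T => List.replicate n dol ++ T).flatten) := by
  intro Ts
  induction Ts with
  | nil => simp
  | cons T₀ tail ih =>
    intro hTs
    rw [List.length_cons, List.replicate_succ, List.flatten_cons, List.map_cons,
      List.flatten_cons]
    exact ((List.Sublist.refl _).append (hTs T₀ (by simp))).append
      (ih (fun T hT => hTs T (by simp [hT])))

end Stmt2Aux

/-- Let `S ⊆ α` be the alphabet and `dollar ∉ S` a fresh letter.
For nonempty strings `T 1, …, T r` over `S` (`r ≥ 1`), `d ∈ ℕ`, and
`P = dollar^(d+1)`, the single string equation
`P T₁ P T₂ ⋯ P T_r ≡ X X ⋯ X` (the single block `X` repeated `r` times) admits a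
solution with at most `d` deletions if and only if there exists a (possibly empty)
string `s` over `S` that is a subsequence of every `T i` and satisfies
`∑ i |T i| − r·|s| ≤ d`. -/
theorem stmt_2 {α β : Type*} (S : Set α) (dollar : α) (hdollar : dollar ∉ S)
    (r : ℕ) (hr : 1 ≤ r)
    (T : Fin r → List α) (hT : ∀ i, T i ≠ []) (hTS : ∀ i, ∀ a ∈ T i, a ∈ S)
    (d : ℕ) (X : β) :
    (∃ T' : List α,
        T'.Sublist ((List.ofFn fun i => List.replicate (d + 1) dollar ++ T i).flatten) ∧
        ((List.ofFn fun i => List.replicate (d + 1) dollar ++ T i).flatten.length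
          - T'.length) ≤ d ∧
        ∃ σ : β → List α, (∀ b : β, σ b ≠ []) ∧ (List.replicate r X).flatMap σ = T') ↔
    (∃ s : List α, (∀ a ∈ s, a ∈ S) ∧ (∀ i, s.Sublist (T i)) ∧
        (∑ i, (T i).length) - r * s.length ≤ d) := by
  classical
  have hWform : (List.ofFn fun i => List.replicate (d + 1) dollar ++ T i)
      = (List.ofFn T).map (fun L => List.replicate (d + 1) dollar ++ L) := by
    rw [List.map_ofFn]; rfl
  set W := (List.ofFn fun i => List.replicate (d + 1) dollar ++ T i).flatten with hW
  have hTsd : ∀ L ∈ List.ofFn T, ∀ a ∈ L, a ≠ dollar := by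
    intro L hL a haL
    obtain ⟨i, rfl⟩ := List.mem_ofFn.mp hL
    exact fun h => hdollar (h ▸ hTS i a haL)
  have hsumeq : ((List.ofFn T).map List.length).sum = ∑ i, (T i).length := by
    rw [List.map_ofFn, List.sum_ofFn]; rfl
  obtain ⟨RP, hRP, hRP1⟩ : ∃ RP, r * (d + 1) = RP ∧ d + 1 ≤ RP :=
    ⟨_, rfl, Nat.le_mul_of_pos_left _ hr⟩
  have hdW : Stmt2Aux.dct dollar W = RP := by
    rw [hW, hWform, Stmt2Aux.dct_FW dollar (d+1) _ hTsd, List.length_ofFn, hRP]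
  have hnW : Stmt2Aux.nct dollar W = ∑ i, (T i).length := by
    rw [hW, hWform, Stmt2Aux.nct_FW dollar (d+1) _ hTsd, hsumeq]
  have hlenW := Stmt2Aux.dct_add_nct dollar W
  constructor
  · rintro ⟨T', hsub, hbud, σ, hσ, hflat⟩
    have hT'eq : T' = (List.replicate r (σ X)).flatten := by
      rw [← hflat, List.flatMap_def, List.map_replicate]
    have hdT' : Stmt2Aux.dct dollar T' = r * Stmt2Aux.dct dollar (σ X) := by
      rw [hT'eq, Stmt2Aux.dct_flatten_replicate]
    have hnT' : Stmt2Aux.nct dollar T' = r * Stmt2Aux.nct dollar (σ X) := by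
      rw [hT'eq, Stmt2Aux.nct_flatten_replicate]
    have hlenT' := Stmt2Aux.dct_add_nct dollar T'
    have hdle : Stmt2Aux.dct dollar T' ≤ Stmt2Aux.dct dollar W := Stmt2Aux.dct_sublist hsub
    have hnle : Stmt2Aux.nct dollar T' ≤ Stmt2Aux.nct dollar W := Stmt2Aux.nct_sublist hsub
    have hlenle : T'.length ≤ W.length := hsub.length_le
    have hdpos : Stmt2Aux.dct dollar (σ X) ≠ 0 := by
      intro h0
      rw [h0, Nat.mul_zero] at hdT'
      omega
    rcases Stmt2Aux.shape dollar (σ X) with ⟨k, w, huk, hwd⟩ | ⟨x, hx, hxs⟩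
    · have hdcomp : Stmt2Aux.dct dollar (σ X) = k := by
        rw [huk, Stmt2Aux.dct_append, Stmt2Aux.dct_replicate, Stmt2Aux.dct_of_ne hwd]
        omega
      have hncomp : Stmt2Aux.nct dollar (σ X) = w.length := by
        rw [huk, Stmt2Aux.nct_append, Stmt2Aux.nct_replicate, Stmt2Aux.nct_of_ne hwd]
        omega
      have hk : k ≠ 0 := by rw [← hdcomp]; exact hdpos
      by_cases hwe : w = []
      · refine ⟨[], by simp, fun i => List.nil_sublist _, ?_⟩
        have h0 : Stmt2Aux.nct dollar T' = 0 := by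
          rw [hnT', hncomp, hwe]
          simp
        simp only [List.length_nil, Nat.mul_zero, Nat.sub_zero]
        omega
      · have hsub2 : ((List.replicate r (List.replicate k dollar ++ w)).flatten).Sublist W := by
          rw [← huk, ← hT'eq]; exact hsub
        have halign := Stmt2Aux.align hk (Nat.succ_ne_zero d) hwe hwd (List.ofFn T) hTsd
          (by rw [List.length_ofFn, ← hWform, ← hW]; exact hsub2)
        have hwT : ∀ i, w.Sublist (T i) :=
          fun i => halign (T i) (List.mem_ofFn.mpr ⟨i, rfl⟩)
        refine ⟨w, ?_, hwT, ?_⟩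
        · intro a haw
          exact hTS ⟨0, hr⟩ a ((hwT ⟨0, hr⟩).subset haw)
        · have hnw : Stmt2Aux.nct dollar T' = r * w.length := by rw [hnT', hncomp]
          rw [← hnw]
          omega
    · exfalso
      have h1 : ((List.replicate r [x, dollar]).flatten).Sublist W :=
        (Stmt2Aux.flatten_replicate_sublist hxs r).trans (hT'eq ▸ hsub)
      have h2 := Stmt2Aux.gcnt_mono (dol := dollar) h1 dollar
      rw [Stmt2Aux.gcnt_xds hx r dollar] at h2
      have h3 : Stmt2Aux.gcnt dollar dollar W ≤ r - 1 := by
        rw [hW, hWform]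
        have := Stmt2Aux.gcnt_FW (dol := dollar) (n := d+1) (List.ofFn T) hTsd
        rwa [List.length_ofFn] at this
      omega
  · rintro ⟨s, hsS, hsT, hsum⟩
    have hsd : ∀ a ∈ s, a ≠ dollar := fun a ha h => hdollar (h ▸ hsS a ha)
    refine ⟨(List.replicate r (List.replicate (d+1) dollar ++ s)).flatten, ?_, ?_,
      fun _ => List.replicate (d+1) dollar ++ s, fun b => by simp, ?_⟩
    · have := Stmt2Aux.bwd (dol := dollar) (d+1) s (List.ofFn T)
        (fun L hL => by obtain ⟨i, rfl⟩ := List.mem_ofFn.mp hL; exact hsT i)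
      rw [List.length_ofFn] at this
      rw [hW, hWform]
      exact this
    · have hd1 : Stmt2Aux.dct dollar ((List.replicate r (List.replicate (d+1) dollar ++ s)).flatten)
          = RP := by
        rw [Stmt2Aux.dct_flatten_replicate, Stmt2Aux.dct_append, Stmt2Aux.dct_replicate,
          Stmt2Aux.dct_of_ne hsd, ← hRP]
      have hn1 : Stmt2Aux.nct dollar ((List.replicate r (List.replicate (d+1) dollar ++ s)).flatten)
          = r * s.length := by
        rw [Stmt2Aux.nct_flatten_replicate, Stmt2Aux.nct_append, Stmt2Aux.nct_replicate,
          Stmt2Aux.nct_of_ne hsd, Nat.zero_add]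
      have hlen1 := Stmt2Aux.dct_add_nct dollar
        ((List.replicate r (List.replicate (d+1) dollar ++ s)).flatten)
      obtain ⟨RS, hRS⟩ : ∃ RS, r * s.length = RS := ⟨_, rfl⟩
      rw [hRS] at hn1
      rw [hRS] at hsum
      omega
    · rw [List.flatMap_def, List.map_replicate]
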